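/- Under the independent cascade model on a tree network with complete snapshot observation at an unknown time t whose distribution satisfies P(t) ≥ P(t+1) for all t, and uniform prior on the source, if u and v are adjacent vertices with ecc(v, I) > ecc(u, I) (where I is the infected set and eccentricity is over I in the infection subgraph), then P(v | O) ≤ P(u | O). -/

import Mathlib

open scoped Classical



/-- The probability of a particular live-edge realization `s ⊆ E(G)` under the IC model:
each edge `e` of `G` is live independently with probability `q e`. -/
noncomputable def liveEdgeWeight {V : Type*} [Fintype V] (G : SimpleGraph V)
    [DecidableEq V] (q : Sym2 V → ℝ) (s : Finset (Sym2 V)) : ℝ :=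
  ∏ e ∈ G.edgeFinset, if e ∈ s then q e else 1 - q e

/-- The set of nodes infected by time `t` when the source is `v` and the live edges
are `s`: those reachable from `v` by a walk of length at most `t` using live edges. -/
def infectedAt {V : Type*} (s : Finset (Sym2 V)) (v : V) (t : ℕ) : Set V :=
  {w | ∃ p : (SimpleGraph.fromEdgeSet (↑s : Set (Sym2 V))).Walk v w, p.length ≤ t}

/-- Likelihood `P(O | source = v, observation time = t)` of observing infected set `I`
under the IC model on `G` with infection probabilities `q`, via the live-edge model. -/
noncomputable def snapshotLikelihood {V : Type*} [Fintype V] (G : SimpleGraph V)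
    [DecidableEq V] (q : Sym2 V → ℝ) (v : V) (t : ℕ) (I : Finset V) : ℝ :=
  ∑ s ∈ G.edgeFinset.powerset,
    liveEdgeWeight G q s * (if infectedAt s v t = (↑I : Set V) then 1 else 0)

/-- Posterior probability (up to the common normalization `P(O)`) that `v` is the
source, with uniform prior on the source and observation-time distribution `PT`. -/
noncomputable def sourcePosterior {V : Type*} [Fintype V] (G : SimpleGraph V)
    [DecidableEq V] (q : Sym2 V → ℝ) (PT : ℕ → ℝ) (I : Finset V) (v : V) : ℝ :=
  (1 / (Fintype.card V : ℝ)) * ∑' t : ℕ, PT t * snapshotLikelihood G q v t I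



section Aux

variable {V : Type*}

/-- In a tree `G`, any path in a subgraph `H ≤ G` has length equal to the `G`-distance
between its endpoints. -/
lemma aux_path_length_eq_dist (G H : SimpleGraph V) (hG : G.IsTree) (hHG : H ≤ G)
    {a b : V} (p : H.Walk a b) (hp : p.IsPath) : p.length = G.dist a b := by
  obtain ⟨qq, hq, hql⟩ := hG.isConnected.exists_path_of_dist a b
  have huniq := (hG.existsUnique_path a b).unique (hp.mapLe hHG) hq
  have : (p.mapLe hHG).length = p.length := SimpleGraph.Walk.length_mapLe hHG p
  rw [← hql, ← huniq, this]

/-- Characterization of membership in `infectedAt` over a tree. -/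
lemma aux_mem_infectedAt (G : SimpleGraph V) (hG : G.IsTree)
    (s : Finset (Sym2 V)) (hs : (↑s : Set (Sym2 V)) ⊆ G.edgeSet) (a w : V) (t : ℕ) :
    w ∈ infectedAt s a t ↔
      (SimpleGraph.fromEdgeSet (↑s : Set (Sym2 V))).Reachable a w ∧ G.dist a w ≤ t := by
  have hHG : SimpleGraph.fromEdgeSet (↑s : Set (Sym2 V)) ≤ G := by
    have := SimpleGraph.fromEdgeSet_mono hs
    rwa [SimpleGraph.fromEdgeSet_edgeSet] at this
  constructor
  · rintro ⟨p, hp⟩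
    refine ⟨⟨p⟩, ?_⟩
    have h1 := aux_path_length_eq_dist G _ hG hHG p.bypass p.bypass_isPath
    have h2 := p.length_bypass_le
    omega
  · rintro ⟨hr, hd⟩
    obtain ⟨p, hp, -⟩ := hr.exists_path_of_dist
    refine ⟨p, ?_⟩
    rw [aux_path_length_eq_dist G _ hG hHG p hp]
    exact hd

/-- Core combinatorial step: if the snapshot from source `v` at time `t+1` equals `I`,
then the snapshot from the neighbor `u` (with smaller infection eccentricity) at time
`t` also equals `I`. -/
lemma aux_key (G : SimpleGraph V) (hG : G.IsTree)
    (I : Finset V) (u v : V) (hu : u ∈ I) (hv : v ∈ I) (huv : G.Adj u v)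
    (hecc : (I.sup fun x => G.dist u x) < I.sup fun x => G.dist v x)
    (s : Finset (Sym2 V)) (hs : (↑s : Set (Sym2 V)) ⊆ G.edgeSet) (t : ℕ)
    (h : infectedAt s v (t + 1) = (↑I : Set V)) : infectedAt s u t = (↑I : Set V) := by
  have hmem : ∀ w, w ∈ infectedAt s v (t+1) ↔ w ∈ I := fun w => by
    rw [h]; exact Iff.rfl
  have hmemv : ∀ w, ((SimpleGraph.fromEdgeSet (↑s : Set (Sym2 V))).Reachable v w ∧
      G.dist v w ≤ t + 1) ↔ w ∈ I := fun w => by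
    rw [← aux_mem_infectedAt G hG s hs v w (t+1)]; exact hmem w
  -- reachability from v to u
  have hrvu : (SimpleGraph.fromEdgeSet (↑s : Set (Sym2 V))).Reachable v u :=
    ((hmemv u).mpr hu).1
  -- v's eccentricity is at most t+1
  have heccv : (I.sup fun x => G.dist v x) ≤ t + 1 := by
    refine Finset.sup_le fun x hx => ((hmemv x).mpr hx).2
  have heccu : (I.sup fun x => G.dist u x) ≤ t := by omega
  have hdvu : G.dist v u = 1 := SimpleGraph.dist_eq_one_iff_adj.mpr huv.symm
  ext w
  rw [aux_mem_infectedAt G hG s hs u w t]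
  constructor
  · rintro ⟨hruw, hduw⟩
    refine (hmemv w).mp ⟨hrvu.trans hruw, ?_⟩
    calc G.dist v w ≤ G.dist v u + G.dist u w := hG.isConnected.dist_triangle
      _ ≤ 1 + t := by omega
      _ = t + 1 := by omega
  · intro hw
    obtain ⟨hrvw, hdvw⟩ := (hmemv w).mpr hw
    refine ⟨hrvu.symm.trans hrvw, ?_⟩
    calc G.dist u w ≤ I.sup fun x => G.dist u x := Finset.le_sup hw
      _ ≤ t := heccu

/-- At time `0` the snapshot from `v` cannot equal `I` (since `ecc v ≥ 1`). -/
lemma aux_zero (G : SimpleGraph V) (hG : G.IsTree)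
    (I : Finset V) (u v : V) (hv : v ∈ I)
    (hecc : (I.sup fun x => G.dist u x) < I.sup fun x => G.dist v x)
    (s : Finset (Sym2 V)) (h : infectedAt s v 0 = (↑I : Set V)) : False := by
  have hIv : (↑I : Set V) = {v} := by
    rw [← h]
    ext w
    constructor
    · rintro ⟨p, hp⟩
      have h0 : p.length = 0 := Nat.le_zero.mp hp
      have : p.getVert p.length = w := p.getVert_length
      rw [h0, p.getVert_zero] at this
      exact this ▸ rfl
    · rintro rfl
      exact ⟨SimpleGraph.Walk.nil, by simp⟩
  have hI : I = {v} := Finset.coe_injective (by simpa using hIv)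
  subst hI
  simp [SimpleGraph.dist_self] at hecc

end Aux

/-- Neighboring nodes inequality: on a tree, under the IC model with uniform prior on
the source and a non-increasing observation-time distribution, if `u` and `v` are
adjacent infected nodes and the infection eccentricity of `v` is strictly larger than
that of `u`, then the posterior probability of `v` is at most that of `u`. -/
theorem neighboring_nodes_inequality {V : Type*} [Fintype V] [DecidableEq V]
    (G : SimpleGraph V) (hG : G.IsTree) (q : Sym2 V → ℝ)
    (hq0 : ∀ e ∈ G.edgeFinset, 0 ≤ q e) (hq1 : ∀ e ∈ G.edgeFinset, q e ≤ 1)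
    (PT : ℕ → ℝ) (hPT0 : ∀ t, 0 ≤ PT t) (hPTmono : ∀ t, PT (t + 1) ≤ PT t)
    (hPTsum : ∑' t : ℕ, PT t = 1)
    (I : Finset V) (u v : V) (hu : u ∈ I) (hv : v ∈ I) (huv : G.Adj u v)
    (hecc : (I.sup fun x => G.dist u x) < I.sup fun x => G.dist v x) :
    sourcePosterior G q PT I v ≤ sourcePosterior G q PT I u := by
  -- nonnegativity of live-edge weights
  have hwnn : ∀ s : Finset (Sym2 V), 0 ≤ liveEdgeWeight G q s := by
    intro s
    refine Finset.prod_nonneg fun e he => ?_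
    by_cases hes : e ∈ s
    · simpa [hes] using hq0 e he
    · simpa [hes] using sub_nonneg.mpr (hq1 e he)
  set L : V → ℕ → ℝ := fun a t => snapshotLikelihood G q a t I with hL
  have hLnn : ∀ a t, 0 ≤ L a t := by
    intro a t
    refine Finset.sum_nonneg fun s _ => mul_nonneg (hwnn s) ?_
    split <;> norm_num
  -- a uniform bound on likelihoods
  set C : ℝ := ∑ s ∈ G.edgeFinset.powerset, liveEdgeWeight G q s with hC
  have hLleC : ∀ a t, L a t ≤ C := by
    intro a t
    refine Finset.sum_le_sum fun s _ => ?_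
    have : (if infectedAt s a t = (↑I : Set V) then (1:ℝ) else 0) ≤ 1 := by
      split <;> norm_num
    calc liveEdgeWeight G q s * (if infectedAt s a t = (↑I : Set V) then (1:ℝ) else 0)
        ≤ liveEdgeWeight G q s * 1 := mul_le_mul_of_nonneg_left this (hwnn s)
      _ = liveEdgeWeight G q s := mul_one _
  -- key likelihood comparisons
  have hkey : ∀ t, L v (t + 1) ≤ L u t := by
    intro t
    refine Finset.sum_le_sum fun s hsmem => ?_
    have hs : (↑s : Set (Sym2 V)) ⊆ G.edgeSet := by
      intro e he
      have := Finset.mem_powerset.mp hsmem he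
      exact SimpleGraph.mem_edgeFinset.mp this
    by_cases hcase : infectedAt s v (t + 1) = (↑I : Set V)
    · have := aux_key G hG I u v hu hv huv hecc s hs t hcase
      simp [hcase, this]
    · simp only [hcase, if_false, mul_zero]
      refine mul_nonneg (hwnn s) ?_
      split <;> norm_num
  have hzero : L v 0 = 0 := by
    refine Finset.sum_eq_zero fun s _ => ?_
    have : ¬ infectedAt s v 0 = (↑I : Set V) := fun h =>
      aux_zero G hG I u v hv hecc s h
    simp [this]
  -- summability
  have hPTsummable : Summable PT := by
    by_contra hns
    rw [tsum_eq_zero_of_not_summable hns] at hPTsum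
    norm_num at hPTsum
  have hsumm : ∀ a : V, Summable (fun t => PT t * L a t) := by
    intro a
    refine Summable.of_nonneg_of_le
      (fun t => mul_nonneg (hPT0 t) (hLnn a t))
      (fun t => mul_le_mul_of_nonneg_left (hLleC a t) (hPT0 t))
      (hPTsummable.mul_right C)
  -- compare the series
  have hseries : ∑' t, PT t * L v t ≤ ∑' t, PT t * L u t := by
    have hshift : ∑' t, PT t * L v t = ∑' t, PT (t + 1) * L v (t + 1) := by
      rw [Summable.tsum_eq_zero_add (hsumm v), hzero, mul_zero, zero_add]
    rw [hshift]
    have h1 : ∀ t : ℕ, PT (t + 1) * L v (t + 1) ≤ PT t * L u t :=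
      fun t => mul_le_mul (hPTmono t) (hkey t) (hLnn v (t + 1)) (hPT0 t)
    have h2 : Summable (fun t : ℕ => PT (t + 1) * L v (t + 1)) :=
      (_root_.summable_nat_add_iff (f := fun t : ℕ => PT t * L v t) 1).mpr (hsumm v)
    exact Summable.tsum_le_tsum h1 h2 (hsumm u)
  unfold sourcePosterior
  refine mul_le_mul_of_nonneg_left hseries ?_
  positivity
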